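/- Let n be real with |n| ≤ 1. Define k(z) = (1 - n z)/(1 - z²) on the unit disc. Then Re(k(z)) > 1/2 for all z in the unit disc. -/

import Mathlib

open Complex Metric

theorem stmt_5 (n : ℝ) (hn : |n| ≤ 1) :
    ∀ z : ℂ, ‖z‖ < 1 →
      1/2 < (((1 : ℂ) - (n:ℂ) * z) / (1 - z ^ 2)).re := by
  intro z hz
  have hr : z.re ^ 2 + z.im ^ 2 < 1 := by
    have h := Complex.sq_norm z
    rw [Complex.normSq_apply] at h
    nlinarith [norm_nonneg z]
  have hn1 : -1 ≤ n := neg_le_of_abs_le hn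
  have hn2 : n ≤ 1 := le_of_abs_le hn
  have hb : (1 - z ^ 2) ≠ 0 := by
    intro h
    have h1 : z ^ 2 = 1 := by linear_combination -h
    have h2 : ‖z‖ ^ 2 = 1 := by
      rw [← norm_pow, h1]; simp
    nlinarith [norm_nonneg z]
  have hs : 0 < Complex.normSq (1 - z ^ 2) := Complex.normSq_pos.mpr hb
  rw [Complex.div_re]
  set x := z.re with hx
  set y := z.im with hy
  have h1 : ((1 : ℂ) - (n:ℂ) * z).re = 1 - n * x := by simp [hx]
  have h2 : ((1 : ℂ) - (n:ℂ) * z).im = -(n * y) := by simp [hy]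
  have h3 : ((1 : ℂ) - z ^ 2).re = 1 - (x ^ 2 - y ^ 2) := by
    simp [pow_two, Complex.mul_re, hx, hy]
  have h4 : ((1 : ℂ) - z ^ 2).im = -(2 * x * y) := by
    simp [pow_two, Complex.mul_im]; ring
  have h5 : Complex.normSq (1 - z ^ 2) = (1 - (x ^ 2 - y ^ 2)) ^ 2 + (2 * x * y) ^ 2 := by
    rw [Complex.normSq_apply, h3, h4]; ring
  rw [h1, h2, h3, h4, h5]
  rw [← add_div, lt_div_iff₀ (by rw [← h5]; exact hs)]
  have key : 0 < 1 + x ^ 2 + y ^ 2 - 2 * n * x := by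
    nlinarith [mul_nonneg (by linarith : (0:ℝ) ≤ 1 + n) (sq_nonneg (1 - x)),
      mul_nonneg (by linarith : (0:ℝ) ≤ 1 - n) (sq_nonneg (1 + x)), sq_nonneg y, sq_nonneg x]
  nlinarith [mul_pos (by linarith : (0:ℝ) < 1 - (x ^ 2 + y ^ 2)) key]
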